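/- Let X be a vector lattice with the Riesz decomposition property, and let z₁,…,zₙ, u, v ∈ X with u,v ≥ 0 and ∑_{i=1}^n |z_i| ≤ u + v. Then there exist u_i, v_i ∈ X with z_i = u_i + v_i for each i, ∑_{i=1}^n |u_i| ≤ 2u and ∑_{i=1}^n |v_i| ≤ 2v. -/

import Mathlib

private lemma riesz_aux {X : Type*} [Lattice X] [AddCommGroup X]
    [CovariantClass X X (· + ·) (· ≤ ·)] :
    ∀ (n : ℕ) (x : Fin n → X), (∀ i, 0 ≤ x i) → ∀ y z : X, 0 ≤ y → 0 ≤ z →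
      (∑ i, x i) ≤ y + z →
      ∃ a b : Fin n → X, (∀ i, x i = a i + b i) ∧ (∀ i, 0 ≤ a i) ∧ (∀ i, 0 ≤ b i) ∧
        (∑ i, a i) ≤ y ∧ (∑ i, b i) ≤ z := by
  letI : IsOrderedAddMonoid X :=
    { add_le_add_left := fun a b h c => add_le_add_left h c }
  intro n
  induction n with
  | zero =>
    intro x hx y z hy hz hsum
    exact ⟨0, 0, by simp, by simp, by simp, by simpa, by simpa⟩
  | succ n ih =>
    intro x hx y z hy hz hsum
    have hx0 : x 0 ≤ y + z := by
      refine le_trans ?_ hsum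
      exact Finset.single_le_sum (fun i _ => hx i) (Finset.mem_univ 0)
    set a0 : X := x 0 ⊓ y with ha0def
    have ha0 : 0 ≤ a0 := le_inf (hx 0) hy
    have hb0 : 0 ≤ x 0 - a0 := sub_nonneg.2 inf_le_left
    have hb0z : x 0 - a0 ≤ z := by
      have h1 : a0 + (x 0 ⊔ y) = x 0 + y := inf_add_sup _ _
      have h2 : x 0 ⊔ y ≤ y + z := sup_le hx0 (le_add_of_nonneg_right hz)
      have heq : x 0 - a0 = x 0 ⊔ y - y := by
        rw [sub_eq_sub_iff_add_eq_add, ← h1, add_comm]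
      rw [heq]
      exact sub_le_iff_le_add'.2 h2
    have hsum' : (∑ i : Fin n, x i.succ) ≤ (y - a0) + (z - (x 0 - a0)) := by
      have h := Fin.sum_univ_succ x
      have : (y - a0) + (z - (x 0 - a0)) = y + z - x 0 := by abel
      rw [this, le_sub_iff_add_le, add_comm]
      calc x 0 + ∑ i : Fin n, x i.succ = ∑ i, x i := (Fin.sum_univ_succ x).symm
        _ ≤ y + z := hsum
    obtain ⟨a', b', hab', ha', hb', hsa', hsb'⟩ :=
      ih (fun i => x i.succ) (fun i => hx i.succ) (y - a0) (z - (x 0 - a0))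
        (sub_nonneg.2 inf_le_right) (sub_nonneg.2 hb0z) hsum'
    refine ⟨Fin.cons a0 a', Fin.cons (x 0 - a0) b', ?_, ?_, ?_, ?_, ?_⟩
    · intro i
      refine Fin.cases ?_ ?_ i
      · simp
      · intro j; simpa using hab' j
    · intro i; exact Fin.cases ha0 ha' i
    · intro i; exact Fin.cases hb0 hb' i
    · rw [Fin.sum_univ_succ]
      simp only [Fin.cons_zero, Fin.cons_succ]
      calc a0 + ∑ i : Fin n, a' i ≤ a0 + (y - a0) := by
            exact add_le_add_right hsa' _
        _ = y := by abel
    · rw [Fin.sum_univ_succ]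
      simp only [Fin.cons_zero, Fin.cons_succ]
      calc (x 0 - a0) + ∑ i : Fin n, b' i ≤ (x 0 - a0) + (z - (x 0 - a0)) := by
            exact add_le_add_right hsb' _
        _ = z := by abel

/-- Riesz decomposition for finite families: in a vector lattice, if
`∑ |z_i| ≤ u + v` with `u, v ≥ 0`, then `z_i = u_i + v_i` with `∑|u_i| ≤ 2u` and
`∑|v_i| ≤ 2v`. -/
theorem stmt12 {X : Type*} [Lattice X] [AddCommGroup X] [Module ℝ X]
    [CovariantClass X X (· + ·) (· ≤ ·)]
    (n : ℕ) (z : Fin n → X) (u v : X) (hu : 0 ≤ u) (hv : 0 ≤ v)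
    (hsum : ∑ i, |z i| ≤ u + v) :
    ∃ uu vv : Fin n → X, (∀ i, z i = uu i + vv i) ∧
      ∑ i, |uu i| ≤ 2 • u ∧ ∑ i, |vv i| ≤ 2 • v := by
  letI : IsOrderedAddMonoid X :=
    { add_le_add_left := fun a b h c => add_le_add_left h c }
  have hpos : ∀ i, (0:X) ≤ (z i)⁺ := fun i => posPart_nonneg _
  have hneg : ∀ i, (0:X) ≤ (z i)⁻ := fun i => negPart_nonneg _
  have hple : (∑ i, (z i)⁺) ≤ u + v := by
    refine le_trans ?_ hsum
    apply Finset.sum_le_sum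
    intro i _
    rw [posPart_def]
    exact sup_le (le_abs_self _) (abs_nonneg _)
  have hnle : (∑ i, (z i)⁻) ≤ u + v := by
    refine le_trans ?_ hsum
    apply Finset.sum_le_sum
    intro i _
    rw [negPart_def]
    exact sup_le (neg_le_abs _) (abs_nonneg _)
  obtain ⟨a, b, hab, ha, hb, hsa, hsb⟩ := riesz_aux n (fun i => (z i)⁺) hpos u v hu hv hple
  obtain ⟨c, d, hcd, hc, hd, hsc, hsd⟩ := riesz_aux n (fun i => (z i)⁻) hneg u v hu hv hnle
  refine ⟨fun i => a i - c i, fun i => b i - d i, ?_, ?_, ?_⟩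
  · intro i
    have hz : z i = (z i)⁺ - (z i)⁻ := (posPart_sub_negPart _).symm
    rw [hz, hab i, hcd i]; beta_reduce; abel
  · calc ∑ i, |a i - c i| ≤ ∑ i, (a i + c i) := by
          apply Finset.sum_le_sum
          intro i _
          refine abs_le'.2 ⟨?_, ?_⟩
          · calc a i - c i ≤ a i := sub_le_self _ (hc i)
              _ ≤ a i + c i := le_add_of_nonneg_right (hc i)
          · rw [neg_sub]
            calc c i - a i ≤ c i := sub_le_self _ (ha i)
              _ ≤ a i + c i := le_add_of_nonneg_left (ha i)
      _ = (∑ i, a i) + (∑ i, c i) := Finset.sum_add_distrib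
      _ ≤ u + u := add_le_add hsa hsc
      _ = 2 • u := (two_smul ℕ u).symm
  · calc ∑ i, |b i - d i| ≤ ∑ i, (b i + d i) := by
          apply Finset.sum_le_sum
          intro i _
          refine abs_le'.2 ⟨?_, ?_⟩
          · calc b i - d i ≤ b i := sub_le_self _ (hd i)
              _ ≤ b i + d i := le_add_of_nonneg_right (hd i)
          · rw [neg_sub]
            calc d i - b i ≤ d i := sub_le_self _ (hb i)
              _ ≤ b i + d i := le_add_of_nonneg_left (hb i)
      _ = (∑ i, b i) + (∑ i, d i) := Finset.sum_add_distrib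
      _ ≤ v + v := add_le_add hsb hsd
      _ = 2 • v := (two_smul ℕ v).symm
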